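/- Let Z' be a real d×n' matrix, Z a real d×n matrix, W₁, W₂, G₁, G₂, P, P', P̃, P̃' real d×d matrices, and η a real number. Assume each of P, P', P̃, P̃' has L2 operator norm at most 1. Define the projected gradients ΔW₁ := G₁ − P̃ G₁ P' and ΔW₂ := G₂ − P̃' G₂ P, and assume the first-order cross term vanishes: Z'ᵀ (W₁ᵀ ΔW₂ + ΔW₁ᵀ W₂) Z = 0. Then the deviation of the alignment scores after the updates W₁ − η ΔW₁ and W₂ − η ΔW₂ satisfies ‖ Z'ᵀ (W₁ − η ΔW₁)ᵀ (W₂ − η ΔW₂) Z − Z'ᵀ W₁ᵀ W₂ Z ‖₂ ≤ η² · ‖Z'‖₂ · ‖Z‖₂ · ( 2‖G₁‖₂‖G₂‖₂ + ‖G₁‖₂² + ‖G₂‖₂² ). (Theorem 3, upper bound on the loss of stability.) -/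

import Mathlib

open Matrix
open scoped Matrix.Norms.L2Operator

lemma l2norm_transpose {m n : ℕ} (A : Matrix (Fin m) (Fin n) ℝ) : ‖Aᵀ‖ = ‖A‖ := by
  have : Aᵀ = Aᴴ := by ext i j; simp [conjTranspose_apply]
  rw [this, Matrix.l2_opNorm_conjTranspose]

lemma sandwich_bound {m : ℕ} (A G B : Matrix (Fin m) (Fin m) ℝ)
    (hA : ‖A‖ ≤ 1) (hB : ‖B‖ ≤ 1) : ‖A * G * B‖ ≤ ‖G‖ := by
  calc ‖A * G * B‖ ≤ ‖A * G‖ * ‖B‖ := Matrix.l2_opNorm_mul _ _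
    _ ≤ (‖A‖ * ‖G‖) * ‖B‖ :=
        mul_le_mul_of_nonneg_right (Matrix.l2_opNorm_mul _ _) (norm_nonneg _)
    _ ≤ (1 * ‖G‖) * 1 := by
        apply mul_le_mul _ hB (norm_nonneg _) (by positivity)
        exact mul_le_mul_of_nonneg_right hA (norm_nonneg _)
    _ = ‖G‖ := by ring

/-- **Theorem 3 (upper bound on the loss of stability).**
Under the dual-sided gradient projection `ΔW₁ = G₁ − Ptil G₁ P'`, `ΔW₂ = G₂ − Ptil' G₂ P`
(with all projectors of spectral norm at most 1), assuming the first-order cross term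
vanishes, the deviation of the alignment scores after updating `W₁ ← W₁ − η ΔW₁` and
`W₂ ← W₂ − η ΔW₂` is bounded by
`η² ‖Z'‖₂ ‖Z‖₂ (2‖G₁‖₂‖G₂‖₂ + ‖G₁‖₂² + ‖G₂‖₂²)`. -/
theorem upper_bound_loss_of_stability
    {d n' n : ℕ}
    (Z' : Matrix (Fin d) (Fin n') ℝ) (Z : Matrix (Fin d) (Fin n) ℝ)
    (W₁ W₂ G₁ G₂ P P' Ptil Ptil' : Matrix (Fin d) (Fin d) ℝ) (η : ℝ)
    (hP : ‖P‖ ≤ 1) (hP' : ‖P'‖ ≤ 1) (hPtil : ‖Ptil‖ ≤ 1) (hPtil' : ‖Ptil'‖ ≤ 1)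
    (hcross :
      Z'ᵀ * (W₁ᵀ * (G₂ - Ptil' * G₂ * P) + (G₁ - Ptil * G₁ * P')ᵀ * W₂) * Z = 0) :
    ‖Z'ᵀ * (W₁ - η • (G₁ - Ptil * G₁ * P'))ᵀ * (W₂ - η • (G₂ - Ptil' * G₂ * P)) * Z
        - Z'ᵀ * W₁ᵀ * W₂ * Z‖
      ≤ η ^ 2 * ‖Z'‖ * ‖Z‖ *
          (2 * ‖G₁‖ * ‖G₂‖ + ‖G₁‖ ^ 2 + ‖G₂‖ ^ 2) := by
  set D₁ := G₁ - Ptil * G₁ * P' with hD₁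
  set D₂ := G₂ - Ptil' * G₂ * P with hD₂
  have key : Z'ᵀ * (W₁ - η • D₁)ᵀ * (W₂ - η • D₂) * Z - Z'ᵀ * W₁ᵀ * W₂ * Z
      = (η ^ 2) • (Z'ᵀ * D₁ᵀ * D₂ * Z)
        - η • (Z'ᵀ * (W₁ᵀ * D₂ + D₁ᵀ * W₂) * Z) := by
    simp only [transpose_sub, transpose_smul, Matrix.sub_mul, Matrix.mul_sub,
      Matrix.smul_mul, Matrix.mul_smul, Matrix.mul_add, Matrix.add_mul, smul_smul,
      smul_sub, sub_smul, add_smul, Matrix.mul_assoc]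
    module
  rw [key, hcross, smul_zero, sub_zero, norm_smul, Real.norm_eq_abs,
    abs_of_nonneg (sq_nonneg η)]
  have hD1 : ‖D₁‖ ≤ 2 * ‖G₁‖ :=
    (norm_sub_le _ _).trans (by linarith [sandwich_bound Ptil G₁ P' hPtil hP'])
  have hD2 : ‖D₂‖ ≤ 2 * ‖G₂‖ :=
    (norm_sub_le _ _).trans (by linarith [sandwich_bound Ptil' G₂ P hPtil' hP])
  have hmain : ‖Z'ᵀ * D₁ᵀ * D₂ * Z‖ ≤ ‖Z'‖ * ‖D₁‖ * ‖D₂‖ * ‖Z‖ := by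
    calc ‖Z'ᵀ * D₁ᵀ * D₂ * Z‖ ≤ ‖Z'ᵀ * D₁ᵀ * D₂‖ * ‖Z‖ := Matrix.l2_opNorm_mul _ _
      _ ≤ (‖Z'ᵀ * D₁ᵀ‖ * ‖D₂‖) * ‖Z‖ :=
          mul_le_mul_of_nonneg_right (Matrix.l2_opNorm_mul _ _) (norm_nonneg _)
      _ ≤ ((‖Z'ᵀ‖ * ‖D₁ᵀ‖) * ‖D₂‖) * ‖Z‖ := by
          apply mul_le_mul_of_nonneg_right _ (norm_nonneg _)
          exact mul_le_mul_of_nonneg_right (Matrix.l2_opNorm_mul _ _) (norm_nonneg _)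
      _ = ‖Z'‖ * ‖D₁‖ * ‖D₂‖ * ‖Z‖ := by rw [l2norm_transpose, l2norm_transpose]
  have hZZ : (0:ℝ) ≤ ‖Z'‖ * ‖Z‖ := mul_nonneg (norm_nonneg _) (norm_nonneg _)
  have h2 : ‖Z'ᵀ * D₁ᵀ * D₂ * Z‖ ≤ ‖Z'‖ * ‖Z‖ * (2 * ‖G₁‖ * ‖G₂‖ + ‖G₁‖ ^ 2 + ‖G₂‖ ^ 2) := by
    have h4 : ‖Z'‖ * ‖D₁‖ * ‖D₂‖ * ‖Z‖ ≤ ‖Z'‖ * (2 * ‖G₁‖) * (2 * ‖G₂‖) * ‖Z‖ := by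
      gcongr
    nlinarith [mul_nonneg hZZ (sq_nonneg (‖G₁‖ - ‖G₂‖))]
  calc η ^ 2 * ‖Z'ᵀ * D₁ᵀ * D₂ * Z‖
      ≤ η ^ 2 * (‖Z'‖ * ‖Z‖ * (2 * ‖G₁‖ * ‖G₂‖ + ‖G₁‖ ^ 2 + ‖G₂‖ ^ 2)) :=
        mul_le_mul_of_nonneg_left h2 (sq_nonneg η)
    _ = η ^ 2 * ‖Z'‖ * ‖Z‖ * (2 * ‖G₁‖ * ‖G₂‖ + ‖G₁‖ ^ 2 + ‖G₂‖ ^ 2) := by ring
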